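/- Let V be an ordered ℚ-vector space with a generator g. For x ∈ V, the following are equivalent: (1) x + εg ≥ 0 for all positive rationals ε; (2) f(x) ≥ 0 for all functionals f : V → ℝ. -/

import Mathlib

open Set LinearMap Submodule

section RatRiesz

variable {E : Type*} [AddCommGroup E] [Module ℚ E]

namespace RatRiesz

/-- Induction step of M. Riesz extension theorem, over ℚ. -/
theorem step (s : ConvexCone ℚ E) (f : E →ₗ.[ℚ] ℝ)
    (nonneg : ∀ x : f.domain, (x : E) ∈ s → 0 ≤ f x)
    (dense : ∀ y, ∃ x : f.domain, (x : E) + y ∈ s) (hdom : f.domain ≠ ⊤) :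
    ∃ g, f < g ∧ ∀ x : g.domain, (x : E) ∈ s → 0 ≤ g x := by
  obtain ⟨y, -, hy⟩ : ∃ y ∈ ⊤, y ∉ f.domain := SetLike.exists_of_lt (lt_top_iff_ne_top.2 hdom)
  obtain ⟨c, le_c, c_le⟩ :
      ∃ c, (∀ x : f.domain, -(x : E) - y ∈ s → f x ≤ c) ∧
        ∀ x : f.domain, (x : E) + y ∈ s → c ≤ f x := by
    set Sp := f '' { x : f.domain | (x : E) + y ∈ s }
    set Sn := f '' { x : f.domain | -(x : E) - y ∈ s }
    suffices (upperBounds Sn ∩ lowerBounds Sp).Nonempty by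
      obtain ⟨c, hc1, hc2⟩ := this
      exact ⟨c, fun x hx => hc1 ⟨x, hx, rfl⟩, fun x hx => hc2 ⟨x, hx, rfl⟩⟩
    refine exists_between_of_forall_le (Nonempty.image f ?_) (Nonempty.image f (dense y)) ?_
    · rcases dense (-y) with ⟨x, hx⟩
      rw [← neg_neg x, NegMemClass.coe_neg, ← sub_eq_add_neg] at hx
      exact ⟨_, hx⟩
    rintro a ⟨xn, hxn, rfl⟩ b ⟨xp, hxp, rfl⟩
    have := s.add_mem hxp hxn
    rw [add_assoc, add_sub_cancel, ← sub_eq_add_neg, ← AddSubgroupClass.coe_sub] at this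
    replace := nonneg _ this
    rwa [f.map_sub, sub_nonneg] at this
  refine ⟨f.supSpanSingleton y (-c) hy, ?_, ?_⟩
  · refine lt_iff_le_not_ge.2 ⟨f.left_le_sup _ _, fun H => ?_⟩
    replace H := LinearPMap.domain_mono.monotone H
    rw [LinearPMap.domain_supSpanSingleton, sup_le_iff, span_le, singleton_subset_iff] at H
    exact hy H.2
  · rintro ⟨z, hz⟩ hzs
    rcases mem_sup.1 hz with ⟨x, hx, y', hy', rfl⟩
    rcases mem_span_singleton.1 hy' with ⟨r, rfl⟩
    simp only [Subtype.coe_mk] at hzs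
    rw [LinearPMap.supSpanSingleton_apply_mk _ _ _ _ _ hx, smul_neg, ← sub_eq_add_neg, sub_nonneg]
    rcases lt_trichotomy r 0 with (hr | hr | hr)
    · have : -(r⁻¹ • x) - y ∈ s := by
        rwa [← s.smul_mem_iff (neg_pos.2 hr), smul_sub, smul_neg, neg_smul, neg_neg, smul_smul,
          mul_inv_cancel₀ hr.ne, one_smul, sub_eq_add_neg, neg_smul, neg_neg]
      replace : f (r⁻¹ • ⟨x, hx⟩) ≤ c := le_c (r⁻¹ • ⟨x, hx⟩) (by exact this)
      rw [f.map_smul, Rat.smul_def, Rat.cast_inv] at this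
      have hr' : (r : ℝ) < 0 := by exact_mod_cast hr
      have hcancel : (r : ℝ) * (r : ℝ)⁻¹ = 1 := mul_inv_cancel₀ hr'.ne
      rw [RingHom.id_apply, Rat.smul_def]
      have h2 := mul_le_mul_of_nonpos_left this hr'.le
      rw [← mul_assoc, hcancel, one_mul] at h2
      linarith
    · subst r
      simp only [RingHom.id_apply, zero_smul, add_zero] at hzs ⊢
      apply nonneg
      exact hzs
    · have : r⁻¹ • x + y ∈ s := by
        rwa [← s.smul_mem_iff hr, smul_add, smul_smul, mul_inv_cancel₀ hr.ne', one_smul]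
      replace : c ≤ f (r⁻¹ • ⟨x, hx⟩) := c_le (r⁻¹ • ⟨x, hx⟩) (by exact this)
      rw [f.map_smul, Rat.smul_def, Rat.cast_inv] at this
      have hr' : (0 : ℝ) < (r : ℝ) := by exact_mod_cast hr
      have hcancel : (r : ℝ) * (r : ℝ)⁻¹ = 1 := mul_inv_cancel₀ hr'.ne'
      rw [RingHom.id_apply, Rat.smul_def]
      have h2 := mul_le_mul_of_nonneg_left this hr'.le
      rw [← mul_assoc, hcancel, one_mul] at h2
      linarith

theorem exists_top (s : ConvexCone ℚ E) (p : E →ₗ.[ℚ] ℝ)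
    (hp_nonneg : ∀ x : p.domain, (x : E) ∈ s → 0 ≤ p x)
    (hp_dense : ∀ y, ∃ x : p.domain, (x : E) + y ∈ s) :
    ∃ q ≥ p, q.domain = ⊤ ∧ ∀ x : q.domain, (x : E) ∈ s → 0 ≤ q x := by
  set S := { p : E →ₗ.[ℚ] ℝ | ∀ x : p.domain, (x : E) ∈ s → 0 ≤ p x }
  have hSc : ∀ c, c ⊆ S → IsChain (· ≤ ·) c → ∀ y ∈ c, ∃ ub ∈ S, ∀ z ∈ c, z ≤ ub := by
    intro c hcs c_chain y hy
    clear hp_nonneg hp_dense p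
    have cne : c.Nonempty := ⟨y, hy⟩
    have hcd : DirectedOn (· ≤ ·) c := c_chain.directedOn
    refine ⟨LinearPMap.sSup c hcd, ?_, fun _ ↦ LinearPMap.le_sSup hcd⟩
    rintro ⟨x, hx⟩ hxs
    have hdir : DirectedOn (· ≤ ·) (LinearPMap.domain '' c) :=
      directedOn_image.2 (hcd.mono LinearPMap.domain_mono.monotone)
    rcases (mem_sSup_of_directed (cne.image _) hdir).1 hx with ⟨_, ⟨f, hfc, rfl⟩, hfx⟩
    have : f ≤ LinearPMap.sSup c hcd := LinearPMap.le_sSup _ hfc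
    convert ← hcs hfc ⟨x, hfx⟩ hxs using 1
    exact this.2 rfl
  obtain ⟨q, hpq, hqs, hq⟩ := zorn_le_nonempty₀ S hSc p hp_nonneg
  refine ⟨q, hpq, ?_, hqs⟩
  contrapose! hq
  have hqd : ∀ y, ∃ x : q.domain, (x : E) + y ∈ s := fun y ↦
    let ⟨x, hx⟩ := hp_dense y
    ⟨Submodule.inclusion hpq.left x, hx⟩
  rcases step s q hqs hqd hq with ⟨r, hqr, hr⟩
  exact ⟨r, hr, hqr.le, fun hrq ↦ hqr.ne' <| hrq.antisymm hqr.le⟩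

end RatRiesz

/-- M. Riesz extension theorem over ℚ. -/
theorem rat_riesz_extension (s : ConvexCone ℚ E) (f : E →ₗ.[ℚ] ℝ)
    (nonneg : ∀ x : f.domain, (x : E) ∈ s → 0 ≤ f x)
    (dense : ∀ y, ∃ x : f.domain, (x : E) + y ∈ s) :
    ∃ g : E →ₗ[ℚ] ℝ, (∀ x : f.domain, g x = f x) ∧ ∀ x ∈ s, 0 ≤ g x := by
  rcases RatRiesz.exists_top s f nonneg dense
    with ⟨⟨g_dom, g⟩, ⟨-, hfg⟩, rfl : g_dom = ⊤, hgs⟩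
  refine ⟨g.comp (LinearMap.id.codRestrict ⊤ fun _ ↦ trivial), ?_, ?_⟩
  · exact fun x => (hfg rfl).symm
  · exact fun x hx => hgs ⟨x, _⟩ hx

end RatRiesz

/-- In an ordered ℚ-vector space `V` with generator `g`, for `x ∈ V` the following are
equivalent: (1) `x + ε • g ≥ 0` for all rationals `ε > 0`; (2) `f x ≥ 0` for every functional
`f : V → ℝ` (ℚ-linear and order-preserving). -/
theorem stmt14 {V : Type*} [AddCommGroup V] [PartialOrder V] [IsOrderedAddMonoid V] [Module ℚ V]
    (hsmul : ∀ (q : ℚ) (x : V), 0 ≤ q → 0 ≤ x → 0 ≤ q • x)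
    (g : V) (hg : 0 ≤ g) (hgen : ∀ x : V, ∃ n : ℕ, x ≤ n • g)
    (x : V) :
    (∀ e : ℚ, 0 < e → 0 ≤ x + e • g) ↔
    (∀ f : V →ₗ[ℚ] ℝ, (∀ y : V, 0 ≤ y → 0 ≤ f y) → 0 ≤ f x) := by
  constructor
  · -- easy direction
    intro h1 f hf
    by_contra hneg
    push_neg at hneg
    have hfg : 0 ≤ f g := hf g hg
    obtain ⟨e, he0, he⟩ : ∃ e : ℚ, 0 < e ∧ (e : ℝ) * f g < -f x := by
      rcases eq_or_lt_of_le hfg with h | h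
      · exact ⟨1, one_pos, by rw [← h]; simpa using hneg⟩
      · obtain ⟨e, he0, he1⟩ := exists_rat_btwn (div_pos (neg_pos.2 hneg) h)
        refine ⟨e, by exact_mod_cast he0, ?_⟩
        calc (e : ℝ) * f g < (-f x / f g) * f g := by
              exact mul_lt_mul_of_pos_right he1 h
          _ = -f x := div_mul_cancel₀ _ h.ne'
    have h2 := hf _ (h1 e he0)
    rw [map_add, map_smul, Rat.smul_def] at h2
    linarith
  · -- hard direction: contrapositive via Riesz extension
    intro h2
    by_contra h1
    push_neg at h1
    obtain ⟨e₀, he₀, hx0⟩ := h1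
    -- the Archimedean cone
    set s : ConvexCone ℚ V :=
      { carrier := { y | ∀ e : ℚ, 0 < e → 0 ≤ y + e • g }
        smul_mem' := by
          intro c hc y hy e he
          have h1 : 0 ≤ y + (e / c) • g := hy _ (div_pos he hc)
          have h2 := hsmul c _ hc.le h1
          rwa [smul_add, smul_smul, mul_div_cancel₀ _ hc.ne'] at h2
        add_mem' := by
          intro y hy z hz e he
          have h1 : 0 ≤ y + (e / 2) • g := hy _ (by positivity)
          have h2 : 0 ≤ z + (e / 2) • g := hz _ (by positivity)
          have := add_nonneg h1 h2
          have heq : y + (e / 2) • g + (z + (e / 2) • g) = y + z + e • g := by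
            module
          rwa [heq] at this } with hs_def
    have hpos : ∀ y : V, 0 ≤ y → y ∈ s := fun y hy e he =>
      add_nonneg hy (hsmul e g he.le hg)
    have hgQ : ∀ y : V, ∃ n : ℚ, 0 ≤ n ∧ y ≤ n • g := by
      intro y
      obtain ⟨n, hn⟩ := hgen y
      refine ⟨(n : ℚ), by positivity, ?_⟩
      rwa [Nat.cast_smul_eq_nsmul]
    have hxs : x ∉ s := fun h => hx0 (h e₀ he₀)
    have hxne : x ≠ 0 := by
      rintro rfl
      exact hxs (fun e he => by simpa using hsmul e g he.le hg)
    have hgne : g ≠ 0 := by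
      rintro rfl
      obtain ⟨n, hn⟩ := hgen (-x)
      rw [smul_zero] at hn
      exact hx0 (by rw [smul_zero, add_zero]; exact neg_nonpos.1 hn)
    have haG : ∀ a : ℚ, a • g ∈ s → 0 ≤ a := by
      intro a ha
      by_contra hlt
      push_neg at hlt
      have ha0 : a ≠ 0 := hlt.ne
      have h1 : 0 ≤ a • g + (-a / 2) • g := ha _ (half_pos (neg_pos.2 hlt))
      rw [← add_smul] at h1
      have heq : a + -a / 2 = a / 2 := by ring
      rw [heq] at h1
      have h2 := hsmul (-2 / a) _ (le_of_lt (div_pos_of_neg_of_neg (by norm_num) hlt)) h1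
      rw [smul_smul, show -2 / a * (a / 2) = -1 by field_simp] at h2
      have hgle : g ≤ 0 := by simpa using h2
      exact hgne (le_antisymm hgle hg)
    -- dense condition pieces
    have hSne : ∃ q : ℚ, q • g - x ∈ s := by
      obtain ⟨n, hn0, hn⟩ := hgQ x
      exact ⟨n, hpos _ (sub_nonneg.2 hn)⟩
    have hTne : ∃ q : ℚ, q • g + x ∈ s := by
      obtain ⟨n, hn0, hn⟩ := hgQ (-x)
      exact ⟨n, hpos _ (by rw [← sub_neg_eq_add]; exact sub_nonneg.2 hn)⟩
    have hST : ∀ t : ℚ, t • g + x ∈ s → ∀ u : ℚ, u • g - x ∈ s → -t ≤ u := by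
      intro t ht u hu
      have := s.add_mem ht hu
      have heq : t • g + x + (u • g - x) = (t + u) • g := by
        rw [add_smul]; abel
      rw [heq] at this
      have := haG _ this
      clear hx0
      linarith
    have hT : ∀ t : ℚ, t • g + x ∈ s → e₀ ≤ t := by
      intro t ht
      by_contra hlt
      push_neg at hlt
      have h3 := ht (e₀ - t) (sub_pos.2 hlt)
      have heq2 : t • g + x + (e₀ - t) • g = x + e₀ • g := by module
      exact hx0 (heq2 ▸ h3)
    -- the real constant c
    obtain ⟨u₀, hu₀⟩ := hSne
    obtain ⟨t₀, ht₀⟩ := hTne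
    set RS : Set ℝ := (fun q : ℚ => (q : ℝ)) '' { q : ℚ | q • g - x ∈ s } with hRS
    have hRSne : RS.Nonempty := ⟨u₀, ⟨u₀, hu₀, rfl⟩⟩
    have hRSbdd : BddBelow RS := by
      refine ⟨-(t₀ : ℝ), ?_⟩
      rintro r ⟨q, hq, rfl⟩
      show -(t₀ : ℝ) ≤ (q : ℝ)
      exact_mod_cast hST t₀ ht₀ q hq
    set c : ℝ := min (sInf RS) (-(e₀ : ℝ)) with hc
    have hcneg : c < 0 := lt_of_le_of_lt (min_le_right _ _)
      (neg_lt_zero.2 (by exact_mod_cast he₀))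
    have hcS : ∀ q : ℚ, q • g - x ∈ s → c ≤ (q : ℝ) := fun q hq =>
      (min_le_left _ _).trans (csInf_le hRSbdd ⟨q, hq, rfl⟩)
    have hcT : ∀ q : ℚ, q • g + x ∈ s → -(q : ℝ) ≤ c := by
      intro q hq
      refine le_min ?_ ?_
      · refine le_csInf hRSne ?_
        rintro r ⟨u, hu, rfl⟩
        show -(q : ℝ) ≤ (u : ℝ)
        exact_mod_cast hST q hq u hu
      · have := hT q hq
        exact neg_le_neg (by exact_mod_cast this)
    by_cases hxg : x ∈ (Submodule.span ℚ {g} : Submodule ℚ V)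
    · -- degenerate case : x is a multiple of g
      obtain ⟨q, hq⟩ := Submodule.mem_span_singleton.1 hxg
      subst hq
      have hq0 : q < 0 := by
        by_contra hcon
        push_neg at hcon
        refine hx0 ?_
        rw [← add_smul]
        exact hsmul _ _ (by positivity) hg
      set f₀ := LinearPMap.mkSpanSingleton (K := ℚ) (L := ℚ) (σ := RingHom.id ℚ) g (1 : ℝ) hgne with hf₀
      have hnn : ∀ z : f₀.domain, (z : V) ∈ s → 0 ≤ f₀ z := by
        rintro ⟨z, hz⟩ hzs
        obtain ⟨a, rfl⟩ := Submodule.mem_span_singleton.1 hz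
        have h5 : f₀ ⟨a • g, hz⟩ = a • (1 : ℝ) :=
          LinearPMap.mkSpanSingleton'_apply _ _ _ a _
        rw [h5, Rat.smul_def, mul_one]
        exact_mod_cast haG a hzs
      have hdense : ∀ y : V, ∃ z : f₀.domain, (z : V) + y ∈ s := by
        intro y
        obtain ⟨n, hn0, hn⟩ := hgQ (-y)
        refine ⟨⟨n • g, Submodule.mem_span_singleton.2 ⟨n, rfl⟩⟩, hpos _ ?_⟩
        rw [← sub_neg_eq_add]
        exact sub_nonneg.2 hn
      obtain ⟨F, hFeq, hFs⟩ := rat_riesz_extension s f₀ hnn hdense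
      have hF := h2 F fun y hy => hFs y (hpos y hy)
      have h4 := hFeq ⟨q • g, hxg⟩
      have h5 : f₀ ⟨q • g, hxg⟩ = q • (1 : ℝ) :=
        LinearPMap.mkSpanSingleton'_apply _ _ _ q _
      rw [h4, h5, Rat.smul_def, mul_one] at hF
      exact absurd hF (not_le.2 (by exact_mod_cast hq0))
    · -- main case : x not a multiple of g
      set f₀ := LinearPMap.mkSpanSingleton (K := ℚ) (L := ℚ) (σ := RingHom.id ℚ) g (1 : ℝ) hgne with hf₀
      have hxg' : x ∉ f₀.domain := hxg
      set f₁ := f₀.supSpanSingleton x c hxg' with hf₁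
      have hnn : ∀ z : f₁.domain, (z : V) ∈ s → 0 ≤ f₁ z := by
        rintro ⟨z, hz⟩ hzs
        have hz' : z ∈ f₀.domain ⊔ (ℚ ∙ x) := by
          rwa [hf₁, LinearPMap.domain_supSpanSingleton] at hz
        rcases Submodule.mem_sup.1 hz' with ⟨w, hw, w', hw', rfl⟩
        rcases Submodule.mem_span_singleton.1 hw' with ⟨b, rfl⟩
        simp only at hzs
        rw [LinearPMap.supSpanSingleton_apply_mk _ _ _ _ _ hw]
        obtain ⟨a, rfl⟩ := Submodule.mem_span_singleton.1 hw
        have h5 : f₀ ⟨a • g, hw⟩ = a • (1 : ℝ) :=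
          LinearPMap.mkSpanSingleton'_apply _ _ _ a _
        rw [h5, Rat.smul_def, mul_one, RingHom.id_apply, Rat.smul_def]
        rcases lt_trichotomy b 0 with hb | hb | hb
        · have hmem : ((-b)⁻¹ * a) • g - x ∈ s := by
            have := s.smul_mem (inv_pos.2 (neg_pos.2 hb)) hzs
            rwa [smul_add, smul_smul, smul_smul,
              show (-b)⁻¹ * b = -1 by rw [inv_neg, neg_mul, inv_mul_cancel₀ hb.ne], neg_one_smul, ← sub_eq_add_neg] at this
          have h6 := hcS _ hmem
          have hb' : (b : ℝ) < 0 := by exact_mod_cast hb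
          have hcancel : (-(b : ℝ)) * (-(b : ℝ))⁻¹ = 1 :=
            mul_inv_cancel₀ (neg_pos.2 hb').ne'
          have h7 : ((((-b)⁻¹ * a : ℚ) : ℝ)) = (-(b : ℝ))⁻¹ * (a : ℝ) := by push_cast; ring
          rw [h7] at h6
          have h8 := mul_le_mul_of_nonneg_left h6 (neg_nonneg.2 hb'.le)
          rw [← mul_assoc, hcancel, one_mul] at h8
          clear hx0
          linarith
        · subst hb
          simp only [zero_smul, add_zero] at hzs
          push_cast
          simpa using (by exact_mod_cast haG a hzs : (0:ℝ) ≤ (a:ℝ))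
        · have hmem : (b⁻¹ * a) • g + x ∈ s := by
            have := s.smul_mem (inv_pos.2 hb) hzs
            rwa [smul_add, smul_smul, smul_smul, inv_mul_cancel₀ hb.ne', one_smul] at this
          have h6 := hcT _ hmem
          have hb' : (0:ℝ) < (b : ℝ) := by exact_mod_cast hb
          have hcancel : (b : ℝ) * (b : ℝ)⁻¹ = 1 := mul_inv_cancel₀ hb'.ne'
          have h7 : ((((b)⁻¹ * a : ℚ) : ℝ)) = ((b : ℝ))⁻¹ * (a : ℝ) := by push_cast; ring
          rw [h7] at h6
          have h8 := mul_le_mul_of_nonneg_left h6 hb'.le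
          rw [mul_neg, ← mul_assoc, hcancel, one_mul] at h8
          clear hx0
          linarith
      have hdense : ∀ y : V, ∃ z : f₁.domain, (z : V) + y ∈ s := by
        intro y
        obtain ⟨n, hn0, hn⟩ := hgQ (-y)
        have hmem : n • g ∈ f₁.domain := by
          rw [hf₁, LinearPMap.domain_supSpanSingleton]
          exact Submodule.mem_sup_left (Submodule.mem_span_singleton.2 ⟨n, rfl⟩)
        refine ⟨⟨n • g, hmem⟩, hpos _ ?_⟩
        rw [← sub_neg_eq_add]
        exact sub_nonneg.2 hn
      obtain ⟨F, hFeq, hFs⟩ := rat_riesz_extension s f₁ hnn hdense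
      have hF := h2 F fun y hy => hFs y (hpos y hy)
      have hmemx : x ∈ f₁.domain := by
        rw [hf₁, LinearPMap.domain_supSpanSingleton]
        exact Submodule.mem_sup_right (Submodule.mem_span_singleton_self x)
      have h4 := hFeq ⟨x, hmemx⟩
      have h5 : f₁ ⟨x, hmemx⟩ = c := by
        have h6 := LinearPMap.supSpanSingleton_apply_mk f₀ x c hxg' 0 (zero_mem _) 1
        simp only [zero_add, RingHom.id_apply, one_smul] at h6
        rw [h6]
        have h7 : f₀ ⟨0, zero_mem _⟩ = 0 := by
          have : (⟨0, zero_mem _⟩ : f₀.domain) = 0 := rfl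
          rw [this, LinearPMap.map_zero]
        rw [h7, zero_add]
      rw [h4, h5] at hF
      exact absurd hF (not_le.2 hcneg)
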